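/- arXiv:2506.18895 — 2 statements merged into one kernel-verified Lean document; each statement's English description precedes it below -/
import Mathlib

section
/- For the Case 1 piecewise tax rule T₁ with aggregate loss S uniformly distributed on [0, w₁+w₂] with probability (1−p₀) and equal to 0 with probability p₀, the expectation is E[T₁(S)] = (1−p₀)·( (w₁+w₂)/2 − (1/(2(w₁+w₂)))·( w₂² − (c−w₁)² + (γ₂/(γ₁+γ₂))·(c−γ₁ζ)² ) ), where c = (1+γ₂/γ₁)w₁ − γ₂ζ. -/
open intervalIntegral

theorem stmt_11 (w1 w2 γ1 γ2 ζ p0 : ℝ) (hw1 : 0 < w1) (hw2 : 0 < w2)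
    (hγ1 : 0 < γ1) (hγ2 : 0 < γ2) (horder : w1 / γ1 ≤ w2 / γ2)
    (hζ : ζ ∈ Set.Icc 0 (w1 / γ1)) (hp0 : p0 ∈ Set.Ico (0:ℝ) 1)
    (c : ℝ) (hc : c = (1 + γ2 / γ1) * w1 - γ2 * ζ)
    (T1 : ℝ → ℝ)
    (hT1 : ∀ s, T1 s = if s ≤ γ1 * ζ then s
      else if s ≤ c then γ1 / (γ1 + γ2) * s + γ1 * γ2 / (γ1 + γ2) * ζ
      else w1) :
    (1 - p0) / (w1 + w2) * ∫ s in (0:ℝ)..(w1 + w2), T1 s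
      = (1 - p0) * ((w1 + w2) / 2 -
          (1 / (2 * (w1 + w2))) *
            (w2 ^ 2 - (c - w1) ^ 2 + (γ2 / (γ1 + γ2)) * (c - γ1 * ζ) ^ 2)) := by
  have hγ12 : (0:ℝ) < γ1 + γ2 := by linarith
  set a := γ1 * ζ with ha
  set k := γ1 / (γ1 + γ2) with hk
  set m := γ1 * γ2 / (γ1 + γ2) * ζ with hm
  set W := w1 + w2 with hW
  obtain ⟨hζ0, hζ1⟩ := hζ
  have ha0 : 0 ≤ a := by positivity
  have haw1 : a ≤ w1 := by
    have h2 : γ1 * (w1 / γ1) = w1 := by field_simp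
    nlinarith
  have hw1c : w1 ≤ c := by
    rw [hc]
    have : γ2 * ζ ≤ γ2 * (w1/γ1) := by nlinarith
    have h2 : γ2 / γ1 * w1 = γ2 * (w1 / γ1) := by ring
    nlinarith
  have hac : a ≤ c := le_trans haw1 hw1c
  have hcW : c ≤ W := by
    rw [hc, hW]
    have h1 : γ2 / γ1 * w1 - γ2 * ζ ≤ w2 := by
      have h2 : γ2 / γ1 * w1 = γ2 * (w1 / γ1) := by ring
      have h3 : γ2 * (w1/γ1) ≤ γ2 * (w2/γ2) := by nlinarith
      have h4 : γ2 * (w2 / γ2) = w2 := by field_simp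
      nlinarith
    linarith
  -- values agree at joints
  have hjoint1 : k * a + m = a := by
    rw [hk, hm, ha]; field_simp
  have hjoint2 : k * c + m = w1 := by
    rw [hk, hm, hc]; field_simp; ring
  -- EqOn facts
  have e1 : Set.EqOn T1 (fun s => s) (Set.uIcc 0 a) := by
    intro s hs
    rw [Set.uIcc_of_le ha0] at hs
    simp [hT1 s, hs.2]
  have e2 : Set.EqOn T1 (fun s => k * s + m) (Set.uIcc a c) := by
    intro s hs
    rw [Set.uIcc_of_le hac] at hs
    rw [hT1 s]
    by_cases h : s ≤ a
    · have : s = a := le_antisymm h hs.1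
      simp [this, ha0, hjoint1]
    · simp only [h, if_false, hs.2, if_true]
  have e3 : Set.EqOn T1 (fun _ => w1) (Set.uIcc c W) := by
    intro s hs
    rw [Set.uIcc_of_le hcW] at hs
    rw [hT1 s]
    by_cases h : s ≤ a
    · have hsc : s = c := le_antisymm (le_trans h hac) hs.1
      have hca : c ≤ a := hsc ▸ h
      have haw : a = w1 := by
        have h5 := hjoint2
        have h6 : c = a := le_antisymm hca hac
        rw [h6] at h5; linarith [hjoint1]
      simp only [h, if_true]
      linarith [le_antisymm hca hac]
    · simp only [h, if_false]
      by_cases h2 : s ≤ c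
      · have : s = c := le_antisymm h2 hs.1
        simp [this, hjoint2]
      · simp [h2]
  -- integrability
  have i1 : IntervalIntegrable T1 MeasureTheory.volume 0 a :=
    (continuous_id.intervalIntegrable 0 a).congr
      (fun s hs => (e1 (Set.uIoc_subset_uIcc hs)).symm)
  have i2 : IntervalIntegrable T1 MeasureTheory.volume a c :=
    (((continuous_const.mul continuous_id).add continuous_const).intervalIntegrable a c).congr
      (fun s hs => (e2 (Set.uIoc_subset_uIcc hs)).symm)
  have i3 : IntervalIntegrable T1 MeasureTheory.volume c W :=
    ((continuous_const).intervalIntegrable c W).congr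
      (fun s hs => (e3 (Set.uIoc_subset_uIcc hs)).symm)
  have hsplit : ∫ s in (0:ℝ)..W, T1 s
      = (∫ s in (0:ℝ)..a, T1 s) + (∫ s in a..c, T1 s) + (∫ s in c..W, T1 s) := by
    rw [integral_add_adjacent_intervals i1 i2,
        integral_add_adjacent_intervals (i1.trans i2) i3]
  have v1 : (∫ s in (0:ℝ)..a, T1 s) = a^2/2 := by
    rw [integral_congr e1, integral_id]; ring
  have v2 : (∫ s in a..c, T1 s) = k * (c^2 - a^2)/2 + m * (c - a) := by
    rw [integral_congr e2,
      integral_add (f := fun x => k * x) (g := fun _ => m) ((continuous_const.mul continuous_id').intervalIntegrable a c)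
        intervalIntegrable_const,
      integral_const_mul, integral_id, integral_const, smul_eq_mul]
    ring
  have v3 : (∫ s in c..W, T1 s) = w1 * (W - c) := by
    rw [integral_congr e3, integral_const, smul_eq_mul]; ring
  rw [hsplit, v1, v2, v3]
  have hWne : W ≠ 0 := by positivity
  have hγ12ne : γ1 + γ2 ≠ 0 := ne_of_gt hγ12
  rw [hk, hm, ha] at *
  subst hc
  field_simp
  ring
end

section
/- Define, for two CARA agents with parameters as in Case 1, the parametric inverse Λ(s) = α₁·e^{s/γ₁} for 0 ≤ s ≤ γ₁ζ, Λ(s) = (α₁^{γ₁}·α₂^{γ₂}·e^{s})^{1/(γ₁+γ₂)} for γ₁ζ ≤ s ≤ c, and Λ(s) = α₂·e^{(s−w₁)/γ₂} for c ≤ s ≤ w₁+w₂, with c = (1+γ₂/γ₁)w₁ − γ₂ζ and ζ = ln(α₂/α₁) ∈ [0, w₁/γ₁]. Then Λ is continuous and strictly increasing on [0, w₁+w₂]. -/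
lemma glue_three {a b : ℝ} (hab : a ≤ b) {f1 f2 f3 : ℝ → ℝ}
    (h1 : StrictMono f1) (h2 : StrictMono f2) (h3 : StrictMono f3)
    (c1 : Continuous f1) (c2 : Continuous f2) (c3 : Continuous f3)
    (e1 : f1 a = f2 a) (e2 : f2 b = f3 b) :
    Continuous (fun s => if s ≤ a then f1 s else if s ≤ b then f2 s else f3 s) ∧
    StrictMono (fun s => if s ≤ a then f1 s else if s ≤ b then f2 s else f3 s) := by
  constructor
  · have hin : Continuous (fun s => if s ≤ b then f2 s else f3 s) :=
      Continuous.if_le c2 c3 continuous_id continuous_const (fun x hx => hx ▸ e2)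
    exact Continuous.if_le c1 hin continuous_id continuous_const
      (fun x hx => by subst hx; rw [if_pos hab]; exact e1)
  · intro x y hxy
    simp only
    by_cases hx1 : x ≤ a
    · rw [if_pos hx1]
      by_cases hy1 : y ≤ a
      · rw [if_pos hy1]; exact h1 hxy
      · rw [if_neg hy1]; push_neg at hy1
        by_cases hy2 : y ≤ b
        · rw [if_pos hy2]
          calc f1 x ≤ f1 a := h1.monotone hx1
            _ = f2 a := e1
            _ < f2 y := h2 hy1
        · rw [if_neg hy2]; push_neg at hy2
          calc f1 x ≤ f1 a := h1.monotone hx1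
            _ = f2 a := e1
            _ ≤ f2 b := h2.monotone hab
            _ = f3 b := e2
            _ < f3 y := h3 hy2
    · rw [if_neg hx1]; push_neg at hx1
      have hy1 : ¬ y ≤ a := fun h => absurd (hxy.le.trans h) (not_le.mpr hx1)
      rw [if_neg hy1]
      by_cases hx2 : x ≤ b
      · rw [if_pos hx2]
        by_cases hy2 : y ≤ b
        · rw [if_pos hy2]; exact h2 hxy
        · rw [if_neg hy2]; push_neg at hy2
          calc f2 x ≤ f2 b := h2.monotone hx2
            _ = f3 b := e2
            _ < f3 y := h3 hy2
      · rw [if_neg hx2]; push_neg at hx2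
        have hy2 : ¬ y ≤ b := fun h => absurd (hxy.le.trans h) (not_le.mpr hx2)
        rw [if_neg hy2]; exact h3 hxy

theorem stmt_14 (w1 w2 γ1 γ2 α1 : ℝ) (hw1 : 0 < w1) (hw2 : 0 < w2)
    (hγ1 : 0 < γ1) (hγ2 : 0 < γ2) (horder : w1 / γ1 ≤ w2 / γ2)
    (hα : α1 ∈ Set.Ioo (0:ℝ) 1)
    (ζ : ℝ) (hζdef : ζ = Real.log ((1 - α1) / α1))
    (hζ : ζ ∈ Set.Icc 0 (w1 / γ1))
    (c : ℝ) (hc : c = (1 + γ2 / γ1) * w1 - γ2 * ζ)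
    (Λ : ℝ → ℝ)
    (hΛ : ∀ s, Λ s = if s ≤ γ1 * ζ then α1 * Real.exp (s / γ1)
      else if s ≤ c then (α1 ^ γ1 * (1 - α1) ^ γ2 * Real.exp s) ^ (1 / (γ1 + γ2))
      else (1 - α1) * Real.exp ((s - w1) / γ2)) :
    ContinuousOn Λ (Set.Icc 0 (w1 + w2)) ∧ StrictMonoOn Λ (Set.Icc 0 (w1 + w2)) := by
  obtain ⟨hα1, hα1'⟩ := hα
  have hα2 : (0:ℝ) < 1 - α1 := by linarith
  have hγ12 : (0:ℝ) < γ1 + γ2 := by linarith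
  set L1 := Real.log α1 with hL1
  set L2 := Real.log (1 - α1) with hL2
  have hζ' : ζ = L2 - L1 := by rw [hζdef, Real.log_div hα2.ne' hα1.ne']
  set K := α1 ^ γ1 * (1 - α1) ^ γ2 with hK
  have hKpos : 0 < K := mul_pos (Real.rpow_pos_of_pos hα1 γ1) (Real.rpow_pos_of_pos hα2 γ2)
  have hlogK : Real.log K = γ1 * L1 + γ2 * L2 := by
    rw [hK, Real.log_mul (Real.rpow_pos_of_pos hα1 γ1).ne' (Real.rpow_pos_of_pos hα2 γ2).ne',
      Real.log_rpow hα1, Real.log_rpow hα2]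
  -- the three pieces
  set f1 : ℝ → ℝ := fun s => α1 * Real.exp (s / γ1) with hf1
  set f2 : ℝ → ℝ := fun s => (α1 ^ γ1 * (1 - α1) ^ γ2 * Real.exp s) ^ (1 / (γ1 + γ2)) with hf2
  set f3 : ℝ → ℝ := fun s => (1 - α1) * Real.exp ((s - w1) / γ2) with hf3
  have f2eq : ∀ s, f2 s = Real.exp ((Real.log K + s) * (1 / (γ1 + γ2))) := by
    intro s
    rw [hf2]
    simp only
    rw [← hK, Real.rpow_def_of_pos (by positivity),
      Real.log_mul hKpos.ne' (Real.exp_pos s).ne', Real.log_exp]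
  have hm1 : StrictMono f1 := fun x y hxy => by
    have h : x / γ1 < y / γ1 := by gcongr
    exact mul_lt_mul_of_pos_left (Real.exp_lt_exp.mpr h) hα1
  have hm2 : StrictMono f2 := by
    intro x y hxy
    rw [f2eq, f2eq]
    exact Real.exp_lt_exp.mpr (by
      have : (0:ℝ) < 1 / (γ1 + γ2) := by positivity
      nlinarith)
  have hm3 : StrictMono f3 := fun x y hxy => by
    have : (x - w1) / γ2 < (y - w1) / γ2 := by gcongr
    exact mul_lt_mul_of_pos_left (Real.exp_lt_exp.mpr this) hα2
  have hc1 : Continuous f1 := by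
    apply Continuous.mul continuous_const
    exact Real.continuous_exp.comp (continuous_id.div_const γ1)
  have hc2 : Continuous f2 := by
    have : Continuous fun s => Real.exp ((Real.log K + s) * (1 / (γ1 + γ2))) :=
      Real.continuous_exp.comp ((continuous_const.add continuous_id).mul continuous_const)
    exact (funext f2eq : f2 = _) ▸ this
  have hc3 : Continuous f3 := by
    apply Continuous.mul continuous_const
    exact Real.continuous_exp.comp ((continuous_id.sub continuous_const).div_const γ2)
  have hab : γ1 * ζ ≤ c := by
    have h1 : γ1 * ζ ≤ w1 := by
      rw [mul_comm]
      exact (le_div_iff₀ hγ1).mp hζ.2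
    have h2 : γ2 * ζ ≤ γ2 * (w1 / γ1) := by
      exact mul_le_mul_of_nonneg_left hζ.2 hγ2.le
    rw [hc]
    have : γ2 * (w1 / γ1) = γ2 / γ1 * w1 := by ring
    nlinarith
  have e1 : f1 (γ1 * ζ) = f2 (γ1 * ζ) := by
    rw [f2eq, hf1]
    simp only
    have h1 : γ1 * ζ / γ1 = ζ := by field_simp
    rw [h1]
    have h2 : α1 = Real.exp L1 := (Real.exp_log hα1).symm
    rw [h2, ← Real.exp_add]
    congr 1
    rw [hlogK, hζ']
    field_simp
    ring
  have e2 : f2 c = f3 c := by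
    rw [f2eq, hf3]
    simp only
    have h2 : 1 - α1 = Real.exp L2 := (Real.exp_log hα2).symm
    rw [h2, ← Real.exp_add]
    congr 1
    rw [hlogK, hc, hζ']
    field_simp
    ring
  have key := glue_three hab hm1 hm2 hm3 hc1 hc2 hc3 e1 e2
  have hΛeq : Λ = fun s => if s ≤ γ1 * ζ then f1 s else if s ≤ c then f2 s else f3 s := by
    funext s
    rw [hΛ s]
  rw [hΛeq]
  exact ⟨key.1.continuousOn, key.2.strictMonoOn _⟩
end
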